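/- arXiv:1705.04369 — 2 statements merged into one kernel-verified Lean document; each statement's English description precedes it below -/
import Mathlib

section
/- Let ν, ν_h ∈ ℝ³ be unit vectors with ν_h·ν ≠ 0, H a symmetric 3×3 real matrix with H ν = 0, and d ∈ ℝ such that I − d·H is invertible. With P = I − ν νᵀ, it holds that (I − d H) P (I − d H)⁻¹ (I − (ν_h νᵀ)/(ν_h·ν)) = I − (ν_h νᵀ)/(ν_h·ν). -/
open Matrix

lemma my_mul_vecMulVec {n : Type*} [Fintype n] (M : Matrix n n ℝ) (a b : n → ℝ) :
    M * vecMulVec a b = vecMulVec (M.mulVec a) b := by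
  ext i j
  simp [Matrix.mul_apply, vecMulVec_apply, Matrix.mulVec, dotProduct, Finset.sum_mul,
    mul_assoc]

lemma my_vecMulVec_mul {n : Type*} [Fintype n] (M : Matrix n n ℝ) (a b : n → ℝ) :
    vecMulVec a b * M = vecMulVec a (Matrix.vecMul b M) := by
  ext i j
  simp [Matrix.mul_apply, vecMulVec_apply, Matrix.vecMul, dotProduct, Finset.mul_sum,
    mul_assoc]

lemma my_vecMulVec_mul_vecMulVec {n : Type*} [Fintype n] (a b c e : n → ℝ) :
    vecMulVec a b * vecMulVec c e = (b ⬝ᵥ c) • vecMulVec a e := by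
  ext i j
  simp only [Matrix.mul_apply, vecMulVec_apply, dotProduct, Matrix.smul_apply,
    Finset.sum_mul, smul_eq_mul]
  exact Finset.sum_congr rfl (fun k _ => by ring)

theorem stmt_3 (ν νh : Fin 3 → ℝ) (hν : ν ⬝ᵥ ν = 1) (hνh : νh ⬝ᵥ νh = 1)
    (hdot : νh ⬝ᵥ ν ≠ 0)
    (H : Matrix (Fin 3) (Fin 3) ℝ) (hH : H.IsSymm) (hHν : H.mulVec ν = 0)
    (d : ℝ) (hinv : IsUnit (1 - d • H))
    (P : Matrix (Fin 3) (Fin 3) ℝ) (hP : P = 1 - vecMulVec ν ν) :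
    (1 - d • H) * P * (1 - d • H)⁻¹ * (1 - (νh ⬝ᵥ ν)⁻¹ • vecMulVec νh ν)
      = 1 - (νh ⬝ᵥ ν)⁻¹ • vecMulVec νh ν := by
  have hνH : Matrix.vecMul ν H = 0 := by
    rw [← Matrix.mulVec_transpose, hH.eq]
    exact hHν
  have hAν : (1 - d • H).mulVec ν = ν := by
    simp [Matrix.sub_mulVec, Matrix.smul_mulVec, hHν]
  have hsm : ν ᵥ* (d • H) = 0 := by
    ext i
    have := congrFun hνH i
    simp only [Matrix.vecMul, dotProduct, Matrix.smul_apply, smul_eq_mul, Pi.zero_apply] at this ⊢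
    calc ∑ x, ν x * (d * H x i) = d * ∑ x, ν x * H x i := by
            rw [Finset.mul_sum]; exact Finset.sum_congr rfl (fun k _ => by ring)
        _ = 0 := by rw [this, mul_zero]
  have hνA : Matrix.vecMul ν (1 - d • H) = ν := by
    rw [Matrix.vecMul_sub, Matrix.vecMul_one, hsm, sub_zero]
  have h1 : (1 - d • H) * vecMulVec ν ν = vecMulVec ν ν := by
    rw [my_mul_vecMulVec, hAν]
  have h2 : vecMulVec ν ν * (1 - d • H) = vecMulVec ν ν := by
    rw [my_vecMulVec_mul, hνA]
  have hcomm : (1 - d • H) * P = P * (1 - d • H) := by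
    rw [hP, mul_sub, mul_one, h1, sub_mul, one_mul, h2]
  have hdet : IsUnit (1 - d • H).det := (Matrix.isUnit_iff_isUnit_det _).mp hinv
  have hAP : (1 - d • H) * P * (1 - d • H)⁻¹ = P := by
    rw [hcomm, Matrix.mul_assoc, Matrix.mul_nonsing_inv _ hdet, Matrix.mul_one]
  rw [hAP, hP]
  have hkey : vecMulVec ν ν * vecMulVec νh ν = (ν ⬝ᵥ νh) • vecMulVec ν ν :=
    my_vecMulVec_mul_vecMulVec ν ν νh ν
  rw [sub_mul, one_mul, mul_sub, mul_one, Matrix.mul_smul, hkey,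
    dotProduct_comm ν νh, smul_smul, inv_mul_cancel₀ hdot, one_smul]
  abel
end

section
/- Let V be a real Hilbert space, a : V × V → ℝ a symmetric continuous coercive bilinear form with coercivity constant α and continuity constant M, and let ã : V × V → ℝ be another bilinear form with |a(v,w) − ã(v,w)| ≤ ε ‖v‖ ‖w‖ for all v, w, and f, f̃ ∈ V* with u, ũ the respective solutions of a(u,v) = f(v) and ã(ũ,v) = f̃(v) for all v (assuming ã is also coercive). Then ‖u − ũ‖ ≤ (1/α)(ε ‖ũ‖ + ‖f − f̃‖_{V*}). -/
theorem stmt_15 (V : Type*) [NormedAddCommGroup V] [InnerProductSpace ℝ V] [CompleteSpace V]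
    (a a' : V →ₗ[ℝ] V →ₗ[ℝ] ℝ) (α M ε : ℝ) (hα : 0 < α) (hM : 0 < M) (hε : 0 ≤ ε)
    (hsymm : ∀ v w, a v w = a w v)
    (hcoer : ∀ v, α * ‖v‖ ^ 2 ≤ a v v)
    (hcont : ∀ v w, |a v w| ≤ M * ‖v‖ * ‖w‖)
    (hpert : ∀ v w, |a v w - a' v w| ≤ ε * ‖v‖ * ‖w‖)
    (ha'coer : ∃ α' > 0, ∀ v, α' * ‖v‖ ^ 2 ≤ a' v v)
    (f f' : V →L[ℝ] ℝ) (u u' : V)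
    (hu : ∀ v, a u v = f v) (hu' : ∀ v, a' u' v = f' v) :
    ‖u - u'‖ ≤ (1 / α) * (ε * ‖u'‖ + ‖f - f'‖) := by
  set e := u - u' with he
  have key : a e e = (f - f') e + (a' u' e - a u' e) := by
    have h1 : a e e = a u e - a u' e := by simp [he, map_sub]; ring
    rw [h1, hu e, hu' e, ContinuousLinearMap.sub_apply]
    ring
  have hb : α * ‖e‖ ^ 2 ≤ (ε * ‖u'‖ + ‖f - f'‖) * ‖e‖ := by
    have h3 : |a u' e - a' u' e| ≤ ε * ‖u'‖ * ‖e‖ := hpert u' e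
    have h4 : |(f - f') e| ≤ ‖f - f'‖ * ‖e‖ := (f - f').le_opNorm e
    have h5 := hcoer e
    have := abs_le.mp h3
    have := abs_le.mp h4
    nlinarith
  rcases eq_or_lt_of_le (norm_nonneg e) with h0 | h0
  · rw [← h0]; positivity
  · rw [div_mul_eq_mul_div, le_div_iff₀ hα]
    nlinarith
end
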